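/- Let (x_k) be generated by FRB with step-size λ > 0 and let z_k = (x_{k+1}, x_k). Define p_{k+1} = (1/λ)(x_k − x_{k+1}) + ∇g(x_{k+1}) − 2∇g(x_k) + ∇g(x_{k−1}), A_{k+1} = p_{k+1} + (1/(2λ))(x_{k+1} − x_k), B_{k+1} = (1/(2λ))(x_k − x_{k+1}). Then (A_{k+1}, B_{k+1}) ∈ ∂H(z_k) and ‖(A_{k+1}, B_{k+1})‖ ≤ √2 (L + 2/λ) ‖z_k − z_{k−1}‖. -/

import Mathlib

open Filter Topology

variable {H : Type*} [NormedAddCommGroup H] [InnerProductSpace ℝ H]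

/-- `v` is a Fréchet subgradient of `f` at `x`. -/
def FSubd (f : H → EReal) (x v : H) : Prop :=
  f x ≠ ⊤ ∧ ∀ ε : ℝ, 0 < ε → ∃ δ : ℝ, 0 < δ ∧ ∀ y : H, ‖y - x‖ < δ →
    f x + (((inner ℝ v (y - x) : ℝ) - ε * ‖y - x‖ : ℝ) : EReal) ≤ f y

/-- `v` is a limiting (Mordukhovich) subgradient of `f` at `x`. -/
def LSubd (f : H → EReal) (x v : H) : Prop :=
  ∃ xs vs : ℕ → H,
    Tendsto xs atTop (nhds x) ∧
    Tendsto (fun k => f (xs k)) atTop (nhds (f x)) ∧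
    (∀ k, FSubd f (xs k) (vs k)) ∧
    Tendsto vs atTop (nhds v)

/-- `f` is proper: never `⊥` and finite somewhere. -/
def ProperFn (f : H → EReal) : Prop :=
  (∀ x, f x ≠ ⊥) ∧ ∃ x, f x ≠ ⊤

/-- The proximal mapping: set of minimizers of `u ↦ f u + (1/(2λ))‖x - u‖²`. -/
def Prox (lam : ℝ) (f : H → EReal) (x : H) : Set H :=
  {y | ∀ u : H, f y + ((1 / (2 * lam) * ‖x - y‖ ^ 2 : ℝ) : EReal)
      ≤ f u + ((1 / (2 * lam) * ‖x - u‖ ^ 2 : ℝ) : EReal)}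

/-- `f` is prox-bounded with threshold (at least) `lf`. -/
def ProxBddWith (f : H → EReal) (lf : ℝ) : Prop :=
  ∀ lam : ℝ, 0 < lam → lam < lf →
    ∃ b : ℝ, ∀ y : H, (b : EReal) ≤ f y + ((1 / (2 * lam) * ‖y‖ ^ 2 : ℝ) : EReal)

lemma quad_aux (a b c L nA nB Z : ℝ) (ha : 0 ≤ a) (hb : 0 ≤ b) (hc : 0 < c) (hL : 0 < L)
    (hA : nA ≤ c*a + L*a + L*b) (hB : nB = c*a) (hZ : Z^2 = a^2 + b^2) (hnA : 0 ≤ nA) :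
    nA^2 + nB^2 ≤ 2*(L+4*c)^2 * Z^2 := by
  have h1 : nA^2 ≤ (c*a + L*a + L*b)^2 := pow_le_pow_left₀ hnA hA 2
  have h2 : 0 ≤ (c+L)*L*(a-b)^2 := by positivity
  have h3 : 0 ≤ (c*L)*a^2 := by positivity
  have h4 : 0 ≤ (c*c)*a^2 := by positivity
  have h5 : 0 ≤ (c*L)*b^2 := by positivity
  have h6 : 0 ≤ (c*c)*b^2 := by positivity
  have h7 : nB^2 = c^2*a^2 := by rw [hB]; ring
  nlinarith [h1, h2, h3, h4, h5, h6, h7]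

lemma fsubd_aux {E : Type*} [NormedAddCommGroup E] [InnerProductSpace ℝ E] [CompleteSpace E]
    (f : E → EReal) (hbot : ∀ x, f x ≠ ⊥)
    (g : E → ℝ) (gx2 : E) (lam : ℝ) (hlam0 : 0 < lam)
    (x2 x1 q A B : E) (hdiff : HasGradientAt g gx2 x2)
    (hprox : x2 ∈ Prox lam f q) (hftop : f x2 ≠ ⊤)
    (hA : A = (1/lam) • (q - x2) + gx2 + (1/(2*lam)) • (x2 - x1))
    (hB : B = (1/(2*lam)) • (x1 - x2)) :
    FSubd (fun p : WithLp 2 (E × E) => f p.fst + ((g p.fst + 1/(4*lam) * ‖p.fst - p.snd‖^2 : ℝ) : EReal))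
      ((WithLp.equiv 2 _).symm (x2, x1)) ((WithLp.equiv 2 _).symm (A, B)) := by
  set z : WithLp 2 (E × E) := (WithLp.equiv 2 _).symm (x2, x1) with hzdef
  have hz1 : z.fst = x2 := rfl
  have hz2 : z.snd = x1 := rfl
  constructor
  · show f x2 + _ ≠ ⊤
    exact (EReal.add_lt_top hftop (EReal.coe_ne_top _)).ne
  intro ε hε
  set rx := (f x2).toReal with hrxdef
  have hrx : f x2 = (rx : EReal) := (EReal.coe_toReal hftop (hbot x2)).symm
  have hkey : ∀ u : E, ∀ ru : ℝ, f u = (ru : EReal) →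
      rx + 1/(2*lam) * ‖q - x2‖^2 ≤ ru + 1/(2*lam) * ‖q - u‖^2 := by
    intro u ru hu
    have h := hprox u
    rw [hrx, hu, ← EReal.coe_add, ← EReal.coe_add, EReal.coe_le_coe_iff] at h
    exact h
  have hgo := hdiff.hasFDerivAt.isLittleO.def (half_pos hε)
  rw [Metric.eventually_nhds_iff] at hgo
  obtain ⟨δ₁, hδ₁, hg1⟩ := hgo
  refine ⟨min δ₁ (lam * ε / 2), by positivity, ?_⟩
  intro y hy
  have hy1 : ‖y - z‖ < δ₁ := lt_of_lt_of_le hy (min_le_left _ _)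
  have hy2 : ‖y - z‖ < lam * ε / 2 := lt_of_lt_of_le hy (min_le_right _ _)
  have hsub1 : (y - z).fst = y.fst - x2 := rfl
  have hsub2 : (y - z).snd = y.snd - x1 := rfl
  have hN2 : ‖y - z‖^2 = ‖y.fst - x2‖^2 + ‖y.snd - x1‖^2 := by
    rw [WithLp.prod_norm_sq_eq_of_L2, hsub1, hsub2]
  have hd1N : ‖y.fst - x2‖ ≤ ‖y - z‖ := by
    nlinarith [norm_nonneg (y - z), norm_nonneg (y.fst - x2), sq_nonneg (‖y.snd - x1‖)]
  have hgrad : |g y.fst - g x2 - (inner ℝ gx2 (y.fst - x2) : ℝ)| ≤ ε/2 * ‖y.fst - x2‖ := by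
    have hd : dist y.fst x2 < δ₁ := by rw [dist_eq_norm]; exact lt_of_le_of_lt hd1N hy1
    have := hg1 hd
    simpa [InnerProductSpace.toDual_apply_apply, Real.norm_eq_abs] using this
  by_cases hfu : f y.fst = ⊤
  · show _ ≤ f y.fst + _
    rw [hfu, EReal.top_add_coe]
    exact le_top
  · set ru := (f y.fst).toReal with hrudef
    have hru : f y.fst = (ru : EReal) := (EReal.coe_toReal hfu (hbot y.fst)).symm
    show f z.fst + _ + _ ≤ f y.fst + _
    rw [hz1, hz2, hrx, hru, ← EReal.coe_add, ← EReal.coe_add, ← EReal.coe_add,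
      EReal.coe_le_coe_iff]
    have hIP : (inner ℝ ((WithLp.equiv 2 (E × E)).symm (A, B)) (y - z) : ℝ)
        = (1/lam) * (inner ℝ (q - x2) (y.fst - x2) : ℝ) + (inner ℝ gx2 (y.fst - x2) : ℝ)
          + (1/(2*lam)) * (inner ℝ (x2 - x1) (y.fst - x2) : ℝ)
          - (1/(2*lam)) * (inner ℝ (x2 - x1) (y.snd - x1) : ℝ) := by
      show inner ℝ A (y.fst - x2) + inner ℝ B (y.snd - x1) = _
      rw [hA, hB]
      rw [inner_add_left, inner_add_left, real_inner_smul_left, real_inner_smul_left,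
        real_inner_smul_left]
      have : (x1 - x2 : E) = -(x2 - x1) := by abel
      rw [this, inner_neg_left]
      ring
    have hkey' := hkey y.fst ru hru
    have hqu : ‖q - y.fst‖^2 = ‖q - x2‖^2 - 2 * (inner ℝ (q - x2) (y.fst - x2) : ℝ) + ‖y.fst - x2‖^2 := by
      have h0 : (q - y.fst : E) = (q - x2) - (y.fst - x2) := by abel
      rw [h0, norm_sub_sq_real]
    rw [hqu] at hkey'
    have hq2 : ‖y.fst - y.snd‖^2 = ‖x2 - x1‖^2 + 2 * ((inner ℝ (x2 - x1) (y.fst - x2) : ℝ)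
        - (inner ℝ (x2 - x1) (y.snd - x1) : ℝ)) + ‖(y.fst - x2) - (y.snd - x1)‖^2 := by
      have h1 : (y.fst - y.snd : E) = (x2 - x1) + ((y.fst - x2) - (y.snd - x1)) := by abel
      rw [h1, norm_add_sq_real, inner_sub_right]
    have hlamne : lam ≠ 0 := ne_of_gt hlam0
    set μ := 1/lam with hμdef
    have hμpos : 0 < μ := by positivity
    have e2 : 1/(2*lam) = μ/2 := by rw [hμdef]; field_simp
    have e4 : 1/(4*lam) = μ/4 := by rw [hμdef]; field_simp
    rw [e2] at hkey' hIP
    have hmulN : μ/2 * ‖y - z‖ ≤ ε/4 := by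
      have h := mul_le_mul_of_nonneg_left hy2.le (by positivity : (0:ℝ) ≤ μ/2)
      calc μ/2 * ‖y - z‖ ≤ μ/2 * (lam * ε / 2) := h
        _ = ε/4 := by rw [hμdef]; field_simp; ring
    have hsq : μ/2 * ‖y.fst - x2‖^2 ≤ ε/4 * ‖y.fst - x2‖ := by
      have h1 : μ/2 * ‖y.fst - x2‖ ≤ μ/2 * ‖y - z‖ :=
        mul_le_mul_of_nonneg_left hd1N (by positivity)
      have h2 : μ/2 * ‖y.fst - x2‖ ≤ ε/4 := le_trans h1 hmulN
      calc μ/2 * ‖y.fst - x2‖^2 = (μ/2 * ‖y.fst - x2‖) * ‖y.fst - x2‖ := by ring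
        _ ≤ ε/4 * ‖y.fst - x2‖ := mul_le_mul_of_nonneg_right h2 (norm_nonneg _)
    have habs := abs_le.mp hgrad
    have hquad : (0:ℝ) ≤ μ/4 * ‖(y.fst - x2) - (y.snd - x1)‖^2 := by positivity
    have hεd : ε/2 * ‖y.fst - x2‖ ≤ ε/2 * ‖y - z‖ :=
      mul_le_mul_of_nonneg_left hd1N (by positivity)
    have hεN : ε/4 * ‖y.fst - x2‖ ≤ ε/4 * ‖y - z‖ :=
      mul_le_mul_of_nonneg_left hd1N (by positivity)
    rw [hIP, e4, hq2]
    linarith [habs.1, habs.2]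

noncomputable section

variable {n : ℕ}

theorem frb_subgradient_lower_bound
    (f : EuclideanSpace ℝ (Fin n) → EReal)
    (hproper : ProperFn f) (hlsc : LowerSemicontinuous f)
    (lf : ℝ) (hlf : 0 < lf) (hpb : ProxBddWith f lf)
    (g : EuclideanSpace ℝ (Fin n) → ℝ)
    (g' : EuclideanSpace ℝ (Fin n) → EuclideanSpace ℝ (Fin n))
    (hdiff : ∀ x, HasGradientAt g (g' x) x)
    (L : ℝ) (hL : 0 < L) (hlip : ∀ x y, ‖g' x - g' y‖ ≤ L * ‖x - y‖)
    (lam : ℝ) (hlam0 : 0 < lam) (hlam2 : lam < lf)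
    (x : ℕ → EuclideanSpace ℝ (Fin n))
    (hscheme : ∀ k : ℕ, 1 ≤ k →
      x (k + 1) ∈ Prox lam f
        (x k + lam • (g' (x (k - 1)) - g' (x k)) - lam • g' (x k)))
    (z : ℕ → WithLp 2 (EuclideanSpace ℝ (Fin n) × EuclideanSpace ℝ (Fin n)))
    (hz : ∀ k, z k = (WithLp.equiv 2 _).symm (x (k + 1), x k))
    (Hf : WithLp 2 (EuclideanSpace ℝ (Fin n) × EuclideanSpace ℝ (Fin n)) → EReal)
    (hH : ∀ p, Hf p =
      f ((WithLp.equiv 2 _ p).1) +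
        ((g ((WithLp.equiv 2 _ p).1) +
          1 / (4 * lam) * ‖(WithLp.equiv 2 _ p).1 - (WithLp.equiv 2 _ p).2‖ ^ 2 : ℝ) : EReal)) :
    ∀ k : ℕ, 1 ≤ k →
      LSubd Hf (z k)
        ((WithLp.equiv 2 _).symm
          ((1 / lam) • (x k - x (k + 1)) + g' (x (k + 1)) - (2 : ℝ) • g' (x k) + g' (x (k - 1))
              + (1 / (2 * lam)) • (x (k + 1) - x k),
            (1 / (2 * lam)) • (x k - x (k + 1)))) ∧
      ‖(WithLp.equiv 2 (EuclideanSpace ℝ (Fin n) × EuclideanSpace ℝ (Fin n))).symm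
          ((1 / lam) • (x k - x (k + 1)) + g' (x (k + 1)) - (2 : ℝ) • g' (x k) + g' (x (k - 1))
              + (1 / (2 * lam)) • (x (k + 1) - x k),
            (1 / (2 * lam)) • (x k - x (k + 1)))‖
        ≤ Real.sqrt 2 * (L + 2 / lam) * ‖z k - z (k - 1)‖ := by
  intro k hk
  have hk1 : k - 1 + 1 = k := Nat.succ_pred_eq_of_pos hk
  obtain ⟨hbot, u₀, hu₀⟩ := hproper
  have hprox := hscheme k hk
  set x0 := x (k - 1) with hx0
  set x1 := x k with hx1
  set x2 := x (k + 1) with hx2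
  set q := x1 + lam • (g' x0 - g' x1) - lam • g' x1 with hq
  have hftop : f x2 ≠ ⊤ := by
    intro h
    have h0 := hprox u₀
    rw [h, EReal.top_add_coe, top_le_iff] at h0
    exact (EReal.add_lt_top hu₀ (EReal.coe_ne_top _)).ne h0
  set A := (1 / lam) • (x1 - x2) + g' x2 - (2 : ℝ) • g' x1 + g' x0
      + (1 / (2 * lam)) • (x2 - x1) with hA0
  set B := (1 / (2 * lam)) • (x1 - x2) with hB0
  have hlamne : lam ≠ 0 := ne_of_gt hlam0
  have hA : A = (1/lam) • (q - x2) + g' x2 + (1/(2*lam)) • (x2 - x1) := by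
    rw [hA0, hq]
    match_scalars <;> (field_simp; try ring)
  have hB : B = (1/(2*lam)) • (x1 - x2) := hB0
  have hHf : Hf = fun p : WithLp 2 (EuclideanSpace ℝ (Fin n) × EuclideanSpace ℝ (Fin n)) =>
      f p.fst + ((g p.fst + 1/(4*lam) * ‖p.fst - p.snd‖^2 : ℝ) : EReal) := by
    funext p
    exact hH p
  have hfs := fsubd_aux f hbot g (g' x2) lam hlam0 x2 x1 q A B (hdiff x2) hprox hftop hA hB
  constructor
  · rw [hHf, hz k]
    exact ⟨fun _ => (WithLp.equiv 2 _).symm (x2, x1), fun _ => (WithLp.equiv 2 _).symm (A, B),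
      tendsto_const_nhds, tendsto_const_nhds, fun _ => hfs, tendsto_const_nhds⟩
  · have hzk : z k - z (k - 1) = (WithLp.equiv 2 _).symm (x2 - x1, x1 - x0) := by
      rw [hz k, hz (k - 1), hk1]
      rfl
    have hZ2 : ‖z k - z (k - 1)‖^2 = ‖x2 - x1‖^2 + ‖x1 - x0‖^2 := by
      rw [hzk, WithLp.prod_norm_sq_eq_of_L2]
      rfl
    have hV2 : ‖(WithLp.equiv 2 (EuclideanSpace ℝ (Fin n) × EuclideanSpace ℝ (Fin n))).symm
        (A, B)‖^2 = ‖A‖^2 + ‖B‖^2 := by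
      rw [WithLp.prod_norm_sq_eq_of_L2]
      rfl
    set c := 1/(2*lam) with hc
    have hcpos : 0 < c := by positivity
    have hA' : A = c • (x1 - x2) + (g' x2 - g' x1) + (g' x0 - g' x1) := by
      rw [hA0, hc]
      match_scalars <;> field_simp <;> ring
    have hnA : ‖A‖ ≤ c * ‖x2 - x1‖ + L * ‖x2 - x1‖ + L * ‖x1 - x0‖ := by
      rw [hA']
      refine le_trans (norm_add₃_le) ?_
      have h1 : ‖c • (x1 - x2)‖ = c * ‖x2 - x1‖ := by
        rw [norm_smul, Real.norm_eq_abs, abs_of_pos hcpos, norm_sub_rev]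
      have h2 : ‖g' x2 - g' x1‖ ≤ L * ‖x2 - x1‖ := hlip x2 x1
      have h3 : ‖g' x0 - g' x1‖ ≤ L * ‖x1 - x0‖ := by
        rw [norm_sub_rev x1 x0]
        exact hlip x0 x1
      linarith
    have hnB : ‖B‖ = c * ‖x2 - x1‖ := by
      rw [hB0, norm_smul, Real.norm_eq_abs, abs_of_pos hcpos, norm_sub_rev]
    have h2l : 2/lam = 4*c := by rw [hc]; field_simp; ring
    set Z := ‖z k - z (k - 1)‖ with hZ
    have hZ0 : 0 ≤ Z := norm_nonneg _
    have hY0 : 0 ≤ Real.sqrt 2 * (L + 2/lam) * Z := by positivity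
    have hsq2 : ‖(WithLp.equiv 2 (EuclideanSpace ℝ (Fin n) × EuclideanSpace ℝ (Fin n))).symm
        (A, B)‖^2 ≤ (Real.sqrt 2 * (L + 2/lam) * Z)^2 := by
      have hs2 : (Real.sqrt 2)^2 = 2 := Real.sq_sqrt (by norm_num)
      have hY2 : (Real.sqrt 2 * (L + 2/lam) * Z)^2 = 2 * (L + 4*c)^2 * Z^2 := by
        rw [h2l, mul_pow, mul_pow, hs2]
      rw [hV2, hY2]
      exact quad_aux ‖x2 - x1‖ ‖x1 - x0‖ c L ‖A‖ ‖B‖ Z (norm_nonneg _) (norm_nonneg _)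
        hcpos hL hnA hnB hZ2 (norm_nonneg _)
    have hfin := Real.sqrt_le_sqrt hsq2
    rwa [Real.sqrt_sq (norm_nonneg _), Real.sqrt_sq hY0] at hfin
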